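/- arXiv:0901.0182 — 5 statements merged into one kernel-verified Lean document; each statement's English description precedes it below -/
import Mathlib

section
/- If (f_n) is a sequence of convex functions on an interval I converging pointwise to a function f on I, then f is convex and the convergence is uniform on every compact subset of the interior of I. -/
open Filter Metric Set

theorem stmt_1 (I : Set ℝ) (hI : Convex ℝ I)
    (f : ℕ → ℝ → ℝ) (g : ℝ → ℝ)
    (hconv : ∀ n, ConvexOn ℝ I (f n))
    (hptw : ∀ x ∈ I, Filter.Tendsto (fun n => f n x) Filter.atTop (nhds (g x))) :
    ConvexOn ℝ I g ∧
      ∀ K : Set ℝ, IsCompact K → K ⊆ interior I →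
        TendstoUniformlyOn f g Filter.atTop K := by
  have hgconv : ConvexOn ℝ I g := by
    refine ⟨hI, fun x hx y hy a b ha hb hab => ?_⟩
    have h1 : Tendsto (fun n => f n (a • x + b • y)) atTop (nhds (g (a • x + b • y))) :=
      hptw _ (hI hx hy ha hb hab)
    have h2 : Tendsto (fun n => a * f n x + b * f n y) atTop (nhds (a * g x + b * g y)) :=
      ((hptw x hx).const_mul a).add ((hptw y hy).const_mul b)
    have := le_of_tendsto_of_tendsto' h1 h2 (fun n => (hconv n).2 hx hy ha hb hab)
    simpa [smul_eq_mul] using this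
  refine ⟨hgconv, fun K hK hKI => ?_⟩
  rcases K.eq_empty_or_nonempty with rfl | hne
  · exact tendstoUniformlyOn_empty
  -- setup: K ⊆ [a,b] ⊆ interior I
  set a := sInf K with ha_def
  set b := sSup K with hb_def
  have haK : a ∈ K := hK.sInf_mem hne
  have hbK : b ∈ K := hK.sSup_mem hne
  have hab : a ≤ b := csInf_le_csSup hne hK.bddBelow hK.bddAbove
  have hKab : K ⊆ Icc a b := fun x hx =>
    ⟨csInf_le hK.bddBelow hx, le_csSup hK.bddAbove hx⟩
  have hopen : IsOpen (interior I) := isOpen_interior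
  obtain ⟨δa, hδa, hballa⟩ := Metric.isOpen_iff.1 hopen a (hKI haK)
  obtain ⟨δb, hδb, hballb⟩ := Metric.isOpen_iff.1 hopen b (hKI hbK)
  set δ := min δa δb / 3 with hδ_def
  have hδ : 0 < δ := by positivity
  set A := a - 2 * δ with hA_def
  set B := b + 2 * δ with hB_def
  have hAmem : A ∈ interior I := by
    apply hballa
    simp only [mem_ball, hA_def, Real.dist_eq]
    have : |a - 2*δ - a| = 2*δ := by rw [show a - 2*δ - a = -(2*δ) by ring, abs_neg,
      abs_of_pos (by positivity)]
    rw [this]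
    have : δ ≤ δa / 3 := by
      rw [hδ_def]; gcongr; exact min_le_left _ _
    linarith
  have hBmem : B ∈ interior I := by
    apply hballb
    simp only [mem_ball, hB_def, Real.dist_eq]
    have : |b + 2*δ - b| = 2*δ := by rw [show b + 2*δ - b = 2*δ by ring,
      abs_of_pos (by positivity)]
    rw [this]
    have : δ ≤ δb / 3 := by
      rw [hδ_def]; gcongr; exact min_le_right _ _
    linarith
  have hAB : A < B := by rw [hA_def, hB_def]; linarith
  have hIccI : Icc A B ⊆ I := by
    intro x hx
    have := (hI.interior).segment_subset hAmem hBmem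
    rw [segment_eq_Icc hAB.le] at this
    exact interior_subset (this hx)
  -- uniform bound on Icc A B
  set c := (A + B) / 2 with hc_def
  have hcI : c ∈ Icc A B := ⟨by rw [hc_def]; linarith, by rw [hc_def]; linarith⟩
  obtain ⟨CA, hCA⟩ := ((hptw A (hIccI ⟨le_refl A, hAB.le⟩)).abs.bddAbove_range :
      BddAbove (range fun n => |f n A|))
  obtain ⟨CB, hCB⟩ := ((hptw B (hIccI ⟨hAB.le, le_refl B⟩)).abs.bddAbove_range :
      BddAbove (range fun n => |f n B|))
  obtain ⟨CC, hCC⟩ := ((hptw c (hIccI hcI)).abs.bddAbove_range :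
      BddAbove (range fun n => |f n c|))
  set C := max (max CA CB) CC with hC_def
  have hfA : ∀ n, |f n A| ≤ C := fun n => le_trans (hCA ⟨n, rfl⟩)
    (le_trans (le_max_left _ _) (le_max_left _ _))
  have hfB : ∀ n, |f n B| ≤ C := fun n => le_trans (hCB ⟨n, rfl⟩)
    (le_trans (le_max_right _ _) (le_max_left _ _))
  have hfc : ∀ n, |f n c| ≤ C := fun n => le_trans (hCC ⟨n, rfl⟩) (le_max_right _ _)
  have hCpos : 0 ≤ C := le_trans (abs_nonneg _) (hfA 0)
  set M := 3 * C with hM_def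
  have hbound : ∀ n, ∀ x ∈ Icc A B, |f n x| ≤ M := by
    intro n x hx
    have hxI : x ∈ I := hIccI hx
    have hAI : A ∈ I := hIccI ⟨le_refl A, hAB.le⟩
    have hBI : B ∈ I := hIccI ⟨hAB.le, le_refl B⟩
    have hupper : f n x ≤ max (f n A) (f n B) := by
      apply (hconv n).le_on_segment hAI hBI
      rw [segment_eq_Icc hAB.le]; exact hx
    have hmax : max (f n A) (f n B) ≤ C :=
      max_le (le_trans (le_abs_self _) (hfA n)) (le_trans (le_abs_self _) (hfB n))
    -- lower bound via reflection
    set w := A + B - x with hw_def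
    have hwIcc : w ∈ Icc A B := ⟨by rw [hw_def]; simp only [mem_Icc] at hx; linarith,
      by rw [hw_def]; simp only [mem_Icc] at hx; linarith⟩
    have hwI : w ∈ I := hIccI hwIcc
    have hmid : f n c ≤ (1/2) * f n x + (1/2) * f n w := by
      have := (hconv n).2 hxI hwI (by norm_num : (0:ℝ) ≤ 1/2) (by norm_num : (0:ℝ) ≤ 1/2)
        (by norm_num)
      have hcx : (1/2 : ℝ) • x + (1/2 : ℝ) • w = c := by
        rw [hw_def, hc_def]; simp only [smul_eq_mul]; ring
      rw [hcx] at this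
      simpa [smul_eq_mul] using this
    have hwup : f n w ≤ C := le_trans ((hconv n).le_on_segment hAI hBI
      (by rw [segment_eq_Icc hAB.le]; exact hwIcc)) hmax
    have hlow : -(3*C) ≤ f n x := by
      have h1 : -C ≤ f n c := neg_le_of_abs_le (hfc n)
      linarith
    rw [abs_le, hM_def]
    constructor
    · linarith
    · linarith [le_trans hupper hmax]
  -- Lipschitz constant
  have hr : c + (B - A)/2 = B := by rw [hc_def]; ring
  have hr' : c - (B - A)/2 = A := by rw [hc_def]; ring
  set r := (B - A) / 2 with hr_def
  have hrpos : 0 < r := by rw [hr_def]; linarith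
  have hball : ball c r = Ioo A B := by
    rw [Real.ball_eq_Ioo, hr', hr]
  have hlip : ∀ n, LipschitzOnWith (2 * M / δ).toNNReal (f n) (ball c (r - δ)) := by
    intro n
    apply ConvexOn.lipschitzOnWith_of_abs_le _ hδ
    · intro z hz
      apply hbound n
      have : z ∈ Ioo A B := by rwa [← hball, mem_ball]
      exact Ioo_subset_Icc_self this
    · apply (hconv n).subset _ (convex_ball c r)
      rw [hball]
      exact fun x hx => hIccI (Ioo_subset_Icc_self hx)
  set L := max (2 * M / δ) 1 with hL_def
  have hLpos : 0 < L := lt_of_lt_of_le one_pos (le_max_right _ _)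
  have hcoe : ((2 * M / δ).toNNReal : ℝ) ≤ L := by
    rw [Real.coe_toNNReal']
    exact max_le (le_max_left _ _) (le_trans zero_le_one (le_max_right _ _))
  have hKball : K ⊆ ball c (r - δ) := by
    intro x hx
    obtain ⟨hx1, hx2⟩ := hKab hx
    rw [mem_ball, Real.dist_eq, abs_lt]
    constructor
    · have : c - (r - δ) = A + δ := by rw [hc_def, hr_def]; ring
      rw [hA_def] at this
      nlinarith [hδ]
    · have : c + (r - δ) = B - δ := by rw [hc_def, hr_def]; ring
      rw [hB_def] at this
      nlinarith [hδ]
  have hlipR : ∀ n, ∀ x ∈ K, ∀ y ∈ K, dist (f n x) (f n y) ≤ L * dist x y := by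
    intro n x hx y hy
    calc dist (f n x) (f n y) ≤ (2 * M / δ).toNNReal * dist x y :=
          (hlip n).dist_le_mul x (hKball hx) y (hKball hy)
      _ ≤ L * dist x y := by gcongr
  have hglip : ∀ x ∈ K, ∀ y ∈ K, dist (g x) (g y) ≤ L * dist x y := by
    intro x hx y hy
    have hxI : x ∈ I := interior_subset (hKI hx)
    have hyI : y ∈ I := interior_subset (hKI hy)
    have : Tendsto (fun n => dist (f n x) (f n y)) atTop (nhds (dist (g x) (g y))) :=
      (hptw x hxI).dist (hptw y hyI)
    exact le_of_tendsto this (Filter.Eventually.of_forall fun n => hlipR n x hx y hy)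
  -- finish via ε-net
  rw [Metric.tendstoUniformlyOn_iff]
  intro ε hε
  set η := ε / (3 * L) with hη_def
  have hηpos : 0 < η := by positivity
  obtain ⟨t, htK, htcover⟩ := hK.elim_nhds_subcover (fun p => ball p η)
    (fun p _ => ball_mem_nhds p hηpos)
  have hev : ∀ᶠ n in atTop, ∀ p ∈ t, dist (g p) (f n p) < ε / 3 := by
    rw [Filter.eventually_all_finset]
    intro p hp
    have hpI : p ∈ I := interior_subset (hKI (htK p hp))
    have := (hptw p hpI).dist (tendsto_const_nhds (x := g p))
    simp only [dist_self] at this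
    have := (Metric.tendsto_nhds.mp this) (ε/3) (by positivity)
    filter_upwards [this] with n hn
    rw [dist_comm]
    simpa [Real.dist_eq] using hn
  filter_upwards [hev] with n hn x hx
  obtain ⟨p, hpt, hxp⟩ := Set.mem_iUnion₂.mp (htcover hx)
  have hpK : p ∈ K := htK p hpt
  have hd : dist x p < η := mem_ball.mp hxp
  have h1 : dist (g x) (g p) ≤ L * dist x p := hglip x hx p hpK
  have h2 : dist (f n p) (f n x) ≤ L * dist x p := by
    rw [dist_comm x p] at *
    exact hlipR n p hpK x hx
  have hLd : L * dist x p < ε / 3 := by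
    calc L * dist x p < L * η := by exact mul_lt_mul_of_pos_left hd hLpos
      _ = ε / 3 := by rw [hη_def]; field_simp
  calc dist (g x) (f n x) ≤ dist (g x) (g p) + dist (g p) (f n p) + dist (f n p) (f n x) :=
        dist_triangle4 _ _ _ _
    _ < ε/3 + ε/3 + ε/3 := by
        gcongr
        · exact lt_of_le_of_lt h1 hLd
        · exact hn p hpt
        · exact lt_of_le_of_lt h2 hLd
    _ = ε := by ring
end

section
/- Under the hypotheses of Hammersley's lemma, for every m ≥ 1 the limit λ = lim h(n)/n satisfies λ ≤ h(m)/m − Δ(m)/m + 4 ∑_{r=2m}^∞ Δ(r)/(r(r+1)). -/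
open Finset Filter

lemma inv_mul_eq (r : ℕ) (hr : 1 ≤ r) :
    ((r:ℝ) * (r+1))⁻¹ = (r:ℝ)⁻¹ - ((r:ℝ)+1)⁻¹ := by
  have h1 : (0:ℝ) < r := by exact_mod_cast hr
  field_simp
  ring

lemma sum_inv_Ico (a b : ℕ) (ha : 1 ≤ a) (hab : a ≤ b) :
    ∑ r ∈ Finset.Ico a b, ((r:ℝ) * (r+1))⁻¹ = (a:ℝ)⁻¹ - (b:ℝ)⁻¹ := by
  induction b, hab using Nat.le_induction with
  | base => simp
  | succ b hab ih =>
    rw [Finset.sum_Ico_succ_top hab, ih, inv_mul_eq b (le_trans ha hab)]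
    push_cast
    ring

lemma block_le (Δ : ℕ → ℝ) (hΔmono : Monotone Δ) (b : ℕ) (hb : 1 ≤ b) :
    Δ b / b ≤ 2 * ∑ r ∈ Finset.Ico b (2*b), Δ r / ((r:ℝ)*(r+1)) := by
  have hb0 : (0:ℝ) < b := by exact_mod_cast hb
  have key : ∑ r ∈ Finset.Ico b (2*b), Δ b * ((r:ℝ)*(r+1))⁻¹
      ≤ ∑ r ∈ Finset.Ico b (2*b), Δ r / ((r:ℝ)*(r+1)) := by
    apply Finset.sum_le_sum
    intro r hr
    have hr1 : b ≤ r := (Finset.mem_Ico.mp hr).1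
    have hr0 : (0:ℝ) < r := by exact_mod_cast lt_of_lt_of_le hb (by exact_mod_cast hr1)
    rw [div_eq_mul_inv]
    apply mul_le_mul_of_nonneg_right (hΔmono hr1)
    positivity
  rw [← Finset.mul_sum, sum_inv_Ico b (2*b) hb (by omega)] at key
  have : Δ b * ((b:ℝ)⁻¹ - ((2*b:ℕ):ℝ)⁻¹) = Δ b / b / 2 := by
    push_cast
    field_simp
    ring
  rw [this] at key
  linarith

lemma hasSum_inv (a : ℕ) (ha : 1 ≤ a) :
    HasSum (fun r : ℕ => (((r+a:ℕ):ℝ) * (((r+a:ℕ):ℝ)+1))⁻¹) ((a:ℝ)⁻¹) := by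
  rw [hasSum_iff_tendsto_nat_of_nonneg (by intro i; positivity)]
  have heq : ∀ n : ℕ, ∑ r ∈ Finset.range n, (((r+a:ℕ):ℝ) * (((r+a:ℕ):ℝ)+1))⁻¹
      = (a:ℝ)⁻¹ - ((n+a:ℕ):ℝ)⁻¹ := by
    intro n
    rw [← sum_inv_Ico a (n+a) ha (by omega), Finset.sum_Ico_eq_sum_range]
    simp only [Nat.add_sub_cancel]
    apply Finset.sum_congr rfl
    intro r _
    rw [Nat.add_comm a r]
  have h2 : Tendsto (fun n : ℕ => ((n+a:ℕ):ℝ)) atTop atTop :=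
    tendsto_natCast_atTop_atTop.comp (tendsto_add_atTop_nat a)
  have h3 := h2.inv_tendsto_atTop
  have h4 : Tendsto (fun n : ℕ => (a:ℝ)⁻¹ - ((n+a:ℕ):ℝ)⁻¹) atTop (nhds ((a:ℝ)⁻¹ - 0)) :=
    tendsto_const_nhds.sub h3
  rw [sub_zero] at h4
  exact h4.congr (fun n => (heq n).symm)

theorem stmt_3 (h : ℕ → ℝ) (Δ : ℕ → ℝ) (hΔmono : Monotone Δ)
    (hΔsum : Summable (fun r : ℕ => Δ r / ((r : ℝ) * (r + 1))))
    (hsub : ∀ n m : ℕ, 1 ≤ n → 1 ≤ m → h (n + m) ≤ h n + h m + Δ (n + m))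
    (L : ℝ) (hL : Filter.Tendsto (fun n : ℕ => h n / n) Filter.atTop (nhds L))
    (m : ℕ) (hm : 1 ≤ m) :
    L ≤ h m / m - Δ m / m
        + 4 * ∑' r : ℕ, Δ (r + 2 * m) / (((r + 2 * m : ℕ) : ℝ) * ((r + 2 * m : ℕ) + 1)) := by
  have hmR : (0:ℝ) < m := by exact_mod_cast hm
  set w : ℕ → ℝ := fun r => Δ r / ((r : ℝ) * (r + 1)) with hw
  have hw' : Summable (fun r : ℕ => w (r + 2*m)) := (summable_nat_add_iff (2*m)).mpr hΔsum
  set S : ℝ := ∑' r : ℕ, w (r + 2*m) with hS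
  -- Step: doubling inequality
  have hstep : ∀ n : ℕ, 1 ≤ n → h (2*n) / ((2*n : ℕ):ℝ) ≤ h n / n + Δ (2*n) / ((2*n : ℕ):ℝ) := by
    intro n hn
    have hnR : (0:ℝ) < n := by exact_mod_cast hn
    have h1 : h (2*n) ≤ 2 * h n + Δ (2*n) := by
      have := hsub n n hn hn
      have h2 : n + n = 2*n := by ring
      rw [h2] at this
      linarith
    have h2R : (0:ℝ) < ((2*n:ℕ):ℝ) := by positivity
    have e : h n / n + Δ (2*n) / ((2*n : ℕ):ℝ) = (2 * h n + Δ (2*n)) / ((2*n : ℕ):ℝ) := by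
      push_cast
      field_simp
    rw [e]
    gcongr
  -- Claim A
  have hA : ∀ k : ℕ, h (2^k*m) / ((2^k*m : ℕ):ℝ)
      ≤ h m / m + ∑ j ∈ Finset.range k, Δ (2^(j+1)*m) / ((2^(j+1)*m : ℕ):ℝ) := by
    intro k
    induction k with
    | zero => simp
    | succ k ih =>
      have hpos : 1 ≤ 2^k*m := Nat.one_le_iff_ne_zero.mpr (by positivity)
      have heq : 2^(k+1)*m = 2*(2^k*m) := by ring
      have := hstep (2^k*m) hpos
      rw [← heq] at this
      rw [Finset.sum_range_succ]
      linarith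
  -- Claim B
  have hB : ∀ k : ℕ, ∑ j ∈ Finset.range k, Δ (2^(j+1)*m) / ((2^(j+1)*m : ℕ):ℝ)
      ≤ 2 * ∑ r ∈ Finset.Ico (2*m) (2^(k+1)*m), w r := by
    intro k
    induction k with
    | zero => simp
    | succ k ih =>
      have hb1 : 1 ≤ 2^(k+1)*m := Nat.one_le_iff_ne_zero.mpr (by positivity)
      have hblock := block_le Δ hΔmono (2^(k+1)*m) hb1
      have heq : 2*(2^(k+1)*m) = 2^(k+2)*m := by ring
      rw [heq] at hblock
      have hp1 : (2:ℕ) ≤ 2^(k+1) := by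
        have := Nat.pow_le_pow_right (show 1 ≤ 2 by norm_num) (show 1 ≤ k+1 by omega)
        simpa using this
      have hp2 : (2:ℕ)^(k+1) ≤ 2^(k+2) := Nat.pow_le_pow_right (by norm_num) (by omega)
      have hle1 : 2*m ≤ 2^(k+1)*m := Nat.mul_le_mul_right m hp1
      have hle2 : 2^(k+1)*m ≤ 2^(k+2)*m := Nat.mul_le_mul_right m hp2
      rw [Finset.sum_range_succ, ← Finset.sum_Ico_consecutive _ hle1 hle2, mul_add]
      have : Δ (2^(k+1)*m) / ((2^(k+1)*m : ℕ):ℝ)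
          ≤ 2 * ∑ r ∈ Finset.Ico (2^(k+1)*m) (2^(k+2)*m), w r := hblock
      linarith
  -- limits
  have hseq : Tendsto (fun k : ℕ => 2^k*m) atTop atTop := by
    apply tendsto_atTop_mono (fun k => Nat.le_mul_of_pos_right (2^k) (by omega))
    exact tendsto_pow_atTop_atTop_of_one_lt one_lt_two
  have hf : Tendsto (fun k : ℕ => h (2^k*m) / ((2^k*m : ℕ):ℝ)) atTop (nhds L) := hL.comp hseq
  have hN : Tendsto (fun k : ℕ => 2^(k+1)*m - 2*m) atTop atTop := by
    apply tendsto_atTop_mono (fun k => ?_) tendsto_id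
    have h1 : k < 2^k := Nat.lt_two_pow_self
    have h2 : 2^k ≤ 2^(k+1) := Nat.pow_le_pow_right (by norm_num) (by omega)
    calc k = k * 1 := (mul_one k).symm
    _ ≤ (2^(k+1) - 2) * m := Nat.mul_le_mul (by omega) hm
    _ = 2^(k+1)*m - 2*m := by rw [Nat.sub_mul]
  have hPS : Tendsto (fun k : ℕ => ∑ r ∈ Finset.Ico (2*m) (2^(k+1)*m), w r) atTop (nhds S) := by
    have t1 : Tendsto (fun n : ℕ => ∑ i ∈ Finset.range n, w (i + 2*m)) atTop (nhds S) :=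
      hw'.hasSum.tendsto_sum_nat
    have t2 := t1.comp hN
    apply t2.congr
    intro k
    simp only [Function.comp]
    rw [Finset.sum_Ico_eq_sum_range]
    apply Finset.sum_congr rfl
    intro i _
    rw [Nat.add_comm (2*m) i]
  have hg : Tendsto (fun k : ℕ => h m / m + 2 * ∑ r ∈ Finset.Ico (2*m) (2^(k+1)*m), w r)
      atTop (nhds (h m / m + 2 * S)) := tendsto_const_nhds.add (hPS.const_mul 2)
  have hmain : L ≤ h m / m + 2 * S := by
    apply le_of_tendsto_of_tendsto' hf hg
    intro k
    exact (hA k).trans (by linarith [hB k])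
  -- Δ m / m ≤ 2 * S
  have hΔm : Δ m / m ≤ 2 * S := by
    have hs1 : HasSum (fun r : ℕ => Δ m * (((r+2*m:ℕ):ℝ) * (((r+2*m:ℕ):ℝ)+1))⁻¹)
        (Δ m * (((2*m:ℕ):ℝ))⁻¹) := (hasSum_inv (2*m) (by omega)).mul_left (Δ m)
    have hle : Δ m * (((2*m:ℕ):ℝ))⁻¹ ≤ S := by
      apply hs1.tsum_eq ▸ Summable.tsum_le_tsum ?_ hs1.summable hw'
      intro r
      have hmono := hΔmono (show m ≤ r + 2*m by omega)
      have hpos : (0:ℝ) ≤ (((r+2*m:ℕ):ℝ) * (((r+2*m:ℕ):ℝ)+1))⁻¹ := by positivity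
      have : w (r + 2*m) = Δ (r+2*m) * (((r+2*m:ℕ):ℝ) * (((r+2*m:ℕ):ℝ)+1))⁻¹ := by
        simp only [hw]
        rw [div_eq_mul_inv]
      rw [this]
      exact mul_le_mul_of_nonneg_right hmono hpos
    have : Δ m * (((2*m:ℕ):ℝ))⁻¹ = Δ m / m / 2 := by
      push_cast
      rw [div_div, div_eq_mul_inv]
      congr 1
      ring
    linarith [hle, this ▸ hle]
  linarith
end

section
/- Let X be a real random variable with E[X] < 0, P(X > 0) > 0, and define a = sup{t ≥ 0 : E[e^{tX}] < ∞}. If a = ∞, then there exists a unique w > 0 with E[e^{wX}] = 1. -/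
open MeasureTheory

lemma abs_exp_sub_one_le' (a : ℝ) : |Real.exp a - 1| ≤ |a| * Real.exp (max a 0) := by
  rcases le_or_gt 0 a with h | h
  · rw [max_eq_left h, abs_of_nonneg h,
      abs_of_nonneg (by linarith [Real.one_le_exp h])]
    have h1 : 1 - a ≤ Real.exp (-a) := by linarith [Real.add_one_le_exp (-a)]
    have h2 : Real.exp (-a) * Real.exp a = 1 := by rw [← Real.exp_add]; simp
    nlinarith [Real.exp_pos a]
  · rw [max_eq_right h.le, Real.exp_zero, mul_one, abs_of_neg h,
      abs_of_nonpos (by linarith [Real.exp_lt_one_iff.mpr h])]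
    linarith [Real.add_one_le_exp a]

lemma slope_bound' (s x : ℝ) (hs0 : 0 < s) (hs1 : s ≤ 1) :
    |Real.exp (s * x) - 1| / s ≤ |x| + Real.exp (2 * x) := by
  have h1 := abs_exp_sub_one_le' (s * x)
  have hmax : max (s * x) 0 ≤ max x 0 := by
    apply max_le _ (le_max_right _ _)
    rcases le_or_gt 0 x with h | h
    · exact le_max_of_le_left (by nlinarith)
    · exact le_max_of_le_right (by nlinarith)
  have h2 : |Real.exp (s * x) - 1| ≤ s * (|x| * Real.exp (max x 0)) := by
    calc |Real.exp (s * x) - 1| ≤ |s * x| * Real.exp (max (s * x) 0) := h1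
      _ = s * (|x| * Real.exp (max (s * x) 0)) := by
          rw [abs_mul, abs_of_pos hs0]; ring
      _ ≤ s * (|x| * Real.exp (max x 0)) := by gcongr
  have h3 : |Real.exp (s * x) - 1| / s ≤ |x| * Real.exp (max x 0) := by
    rw [div_le_iff₀ hs0]; linarith [h2]
  refine h3.trans ?_
  rcases le_or_gt x 0 with h | h
  · rw [max_eq_right h, Real.exp_zero, mul_one]
    linarith [Real.exp_pos (2 * x)]
  · rw [max_eq_left h.le, abs_of_pos h]
    have hx : x ≤ Real.exp x := by linarith [Real.add_one_le_exp x]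
    have h2x : Real.exp x * Real.exp x = Real.exp (2 * x) := by
      rw [← Real.exp_add]; ring_nf
    nlinarith [Real.exp_pos x, abs_nonneg x, abs_of_pos h]

theorem stmt_15 {Ω : Type*} [MeasurableSpace Ω] (μ : Measure Ω) [IsProbabilityMeasure μ]
    (X : Ω → ℝ) (hmeas : Measurable X)
    (hintX : Integrable X μ) (hEX : ∫ ω, X ω ∂μ < 0)
    (hpos : 0 < μ {ω | 0 < X ω})
    (hmgf : ∀ t : ℝ, 0 ≤ t → Integrable (fun ω => Real.exp (t * X ω)) μ) :
    ∃! w : ℝ, 0 < w ∧ ∫ ω, Real.exp (w * X ω) ∂μ = 1 := by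
  set f : ℝ → ℝ := fun t => ∫ ω, Real.exp (t * X ω) ∂μ with hfdef
  have hf0 : f 0 = 1 := by simp [hfdef]
  -- convexity of f on [0, ∞)
  have hconv : ConvexOn ℝ (Set.Ici (0:ℝ)) f := by
    refine ⟨convex_Ici 0, fun a ha b hb p q hp hq hpq => ?_⟩
    simp only [smul_eq_mul, hfdef]
    have hab : (0:ℝ) ≤ p * a + q * b :=
      add_nonneg (mul_nonneg hp ha) (mul_nonneg hq hb)
    calc ∫ ω, Real.exp ((p * a + q * b) * X ω) ∂μ
        ≤ ∫ ω, (p * Real.exp (a * X ω) + q * Real.exp (b * X ω)) ∂μ := by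
          refine integral_mono (hmgf _ hab)
            (((hmgf a ha).const_mul p).add ((hmgf b hb).const_mul q)) fun ω => ?_
          have h := convexOn_exp.2 (Set.mem_univ (a * X ω)) (Set.mem_univ (b * X ω)) hp hq hpq
          simp only [smul_eq_mul] at h
          have he : (p * a + q * b) * X ω = p * (a * X ω) + q * (b * X ω) := by ring
          rw [he]; exact h
      _ = p * ∫ ω, Real.exp (a * X ω) ∂μ + q * ∫ ω, Real.exp (b * X ω) ∂μ := by
          rw [integral_add (((hmgf a ha).const_mul p)) ((hmgf b hb).const_mul q),
            integral_const_mul, integral_const_mul]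
  -- there exists t0 > 0 with f t0 < 1
  have hex_lt : ∃ t0 : ℝ, 0 < t0 ∧ f t0 < 1 := by
    by_contra hcon
    push_neg at hcon
    set g : ℕ → Ω → ℝ :=
      fun n ω => (Real.exp ((1/(n+1:ℝ)) * X ω) - 1) / (1/(n+1:ℝ)) with hgdef
    have hsn : ∀ n : ℕ, 0 < (1/(n+1:ℝ)) := fun n => by positivity
    have hs1 : ∀ n : ℕ, (1/(n+1:ℝ)) ≤ 1 := fun n => by
      rw [div_le_one (by positivity)]
      linarith [Nat.cast_nonneg (α := ℝ) n]
    have hmeasg : ∀ n, AEStronglyMeasurable (g n) μ := fun n =>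
      (((hmeas.const_mul _).exp.sub measurable_const).div_const _).aestronglyMeasurable
    have hbnd : Integrable (fun ω => |X ω| + Real.exp (2 * X ω)) μ :=
      hintX.abs.add (hmgf 2 (by norm_num))
    have hboundg : ∀ n, ∀ᵐ ω ∂μ, ‖g n ω‖ ≤ |X ω| + Real.exp (2 * X ω) := by
      intro n
      refine Filter.Eventually.of_forall fun ω => ?_
      show ‖(Real.exp ((1/(n+1:ℝ)) * X ω) - 1) / (1/(n+1:ℝ))‖ ≤ _
      rw [Real.norm_eq_abs, abs_div, abs_of_pos (hsn n)]
      exact slope_bound' _ _ (hsn n) (hs1 n)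
    have hlimg : ∀ᵐ ω ∂μ,
        Filter.Tendsto (fun n => g n ω) Filter.atTop (nhds (X ω)) := by
      refine Filter.Eventually.of_forall fun ω => ?_
      have hd : HasDerivAt (fun t : ℝ => Real.exp (t * X ω)) (X ω) 0 := by
        have := (hasDerivAt_mul_const (X ω)).exp (x := 0)
        simpa using this
      rw [hasDerivAt_iff_tendsto_slope] at hd
      have hseq : Filter.Tendsto (fun n : ℕ => (1/(n+1:ℝ))) Filter.atTop
          (nhdsWithin 0 {(0:ℝ)}ᶜ) :=
        tendsto_nhdsWithin_of_tendsto_nhds_of_eventually_within _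
          tendsto_one_div_add_atTop_nhds_zero_nat
          (Filter.Eventually.of_forall fun n => (hsn n).ne')
      refine (hd.comp hseq).congr fun n => ?_
      simp [slope, hgdef]
      ring
    have hten := tendsto_integral_of_dominated_convergence _ hmeasg hbnd hboundg hlimg
    have hge : ∀ n : ℕ, 0 ≤ ∫ ω, g n ω ∂μ := by
      intro n
      have hig : ∫ ω, g n ω ∂μ = (f (1/(n+1:ℝ)) - 1) / (1/(n+1:ℝ)) := by
        rw [hgdef]
        simp only
        rw [integral_div, integral_sub (hmgf _ (hsn n).le) (integrable_const 1),
          integral_const]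
        simp [hfdef]
      rw [hig]
      exact div_nonneg (by linarith [hcon _ (hsn n)]) (hsn n).le
    have hfin : (0:ℝ) ≤ ∫ ω, X ω ∂μ := ge_of_tendsto' hten hge
    linarith
  -- there exists t1 beyond any bound with f t1 > 1
  obtain ⟨t0, ht0, hft0⟩ := hex_lt
  have hex_gt : ∃ t1 : ℝ, t0 < t1 ∧ 1 < f t1 := by
    obtain ⟨ε, hε0, hμε⟩ : ∃ ε : ℝ, 0 < ε ∧ μ {ω | ε ≤ X ω} ≠ 0 := by
      by_contra h
      push_neg at h
      have hsub : {ω | 0 < X ω} ⊆ ⋃ n : ℕ, {ω | (1/(n+1:ℝ)) ≤ X ω} := by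
        intro ω hω
        obtain ⟨n, hn⟩ := exists_nat_one_div_lt (Set.mem_setOf_eq ▸ hω)
        exact Set.mem_iUnion.2 ⟨n, hn.le⟩
      have h0 : μ {ω | 0 < X ω} = 0 :=
        measure_mono_null hsub (measure_iUnion_null fun n => h _ (by positivity))
      exact absurd h0 hpos.ne'
    have hp : 0 < (μ {ω | ε ≤ X ω}).toReal := ENNReal.toReal_pos hμε (measure_ne_top μ _)
    set p := (μ {ω | ε ≤ X ω}).toReal with hpdef
    set t1 := max (t0 + 1) ((Real.log (1/p) + 1)/ε) with ht1def
    have ht0t1 : t0 < t1 := lt_of_lt_of_le (lt_add_one t0) (le_max_left _ _)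
    have ht1pos : (0:ℝ) ≤ t1 := le_trans ht0.le ht0t1.le
    have hlog : Real.log (1/p) < t1 * ε := by
      have hle : (Real.log (1/p) + 1)/ε ≤ t1 := le_max_right _ _
      rw [div_le_iff₀ hε0] at hle
      linarith
    have hexp : 1/p < Real.exp (t1 * ε) := by
      calc 1/p = Real.exp (Real.log (1/p)) := (Real.exp_log (by positivity)).symm
        _ < _ := Real.exp_lt_exp.2 hlog
    have hgt : 1 < Real.exp (t1 * ε) * p := (div_lt_iff₀ hp).1 hexp
    refine ⟨t1, ht0t1, lt_of_lt_of_le hgt ?_⟩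
    have hS : MeasurableSet {ω | ε ≤ X ω} := hmeas measurableSet_Ici
    have hi := hmgf t1 ht1pos
    calc Real.exp (t1*ε) * p = ∫ _ω in {ω | ε ≤ X ω}, Real.exp (t1*ε) ∂μ := by
          rw [setIntegral_const, smul_eq_mul, measureReal_def, hpdef]; ring
      _ ≤ ∫ ω in {ω | ε ≤ X ω}, Real.exp (t1 * X ω) ∂μ := by
          refine setIntegral_mono_on (integrableOn_const (measure_lt_top _ _).ne)
            hi.integrableOn hS fun ω hω => ?_
          exact Real.exp_le_exp.2 (mul_le_mul_of_nonneg_left hω ht1pos)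
      _ ≤ f t1 := setIntegral_le_integral hi
            (Filter.Eventually.of_forall fun ω => (Real.exp_pos _).le)
  obtain ⟨t1, ht01, hft1⟩ := hex_gt
  have hcont : ContinuousOn f (Set.Icc t0 t1) := by
    refine hconv.continuousOn_interior.mono ?_
    rw [interior_Ici]
    intro x hx
    exact lt_of_lt_of_le ht0 hx.1
  obtain ⟨w, hw_mem, hfw⟩ := intermediate_value_Icc ht01.le hcont ⟨hft0.le, hft1.le⟩
  have hw0 : 0 < w := lt_of_lt_of_le ht0 hw_mem.1
  -- uniqueness helper
  have huniq : ∀ u v : ℝ, 0 < u → f u = 1 → 0 < v → f v = 1 → u < v → False := by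
    intro u v hu hfu hv hfv huv
    rcases lt_trichotomy t0 u with h1 | h1 | h1
    · have hs := hconv.slope_mono_adjacent (Set.mem_Ici.2 ht0.le) (Set.mem_Ici.2 hv.le) h1 huv
      rw [hfu, hfv] at hs
      have hlt : (0:ℝ) < (1 - f t0) / (u - t0) := div_pos (by linarith) (by linarith)
      simp only [sub_self, zero_div] at hs
      linarith
    · rw [h1, hfu] at hft0; linarith
    · have hs := hconv.slope_mono_adjacent (Set.mem_Ici.2 le_rfl) (Set.mem_Ici.2 ht0.le) hu h1
      rw [hfu, hf0] at hs
      have hlt : (f t0 - 1) / (t0 - u) < 0 :=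
        div_neg_of_neg_of_pos (by linarith) (by linarith)
      simp only [sub_self, sub_zero, zero_div] at hs
      linarith
  refine ⟨w, ⟨hw0, hfw⟩, fun y hy => ?_⟩
  rcases lt_trichotomy y w with h | h | h
  · exact absurd (huniq y w hy.1 hy.2 hw0 hfw h) not_false
  · exact h
  · exact absurd (huniq w y hw0 hfw hy.1 hy.2 h) not_false
end

section
/- Let X be a real random variable with E[X] < 0, P(X > 0) > 0, a = sup{t ≥ 0 : E[e^{tX}] < ∞} finite, and lim_{t→a⁻} E[e^{tX}] ≥ 1. Then there exists a unique w ∈ (0, a] with E[e^{wX}] = 1 (interpreting E[e^{aX}] as the left limit if infinite). -/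
open MeasureTheory Real Filter Topology

lemma aux_exp_combo {x t w l : ℝ} (hl0 : 0 ≤ l) (hl1 : l ≤ 1) :
    Real.exp ((l * t + (1 - l) * w) * x) ≤ l * Real.exp (t * x) + (1 - l) * Real.exp (w * x) := by
  have h := convexOn_exp.2 (Set.mem_univ (t * x)) (Set.mem_univ (w * x)) hl0
    (by linarith : (0:ℝ) ≤ 1 - l) (by ring)
  simpa [smul_eq_mul, add_mul, mul_assoc] using h

lemma aux_slope_mono {x s t : ℝ} (hs : 0 < s) (hst : s ≤ t) :
    (Real.exp (s * x) - 1) / s ≤ (Real.exp (t * x) - 1) / t := by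
  have ht : 0 < t := hs.trans_le hst
  have h := aux_exp_combo (x := x) (t := t) (w := 0) (l := s / t)
    (le_of_lt (div_pos hs ht)) (div_le_one_of_le₀ hst ht.le)
  have heq : (s / t * t + (1 - s / t) * 0) = s := by field_simp; ring
  rw [zero_mul, Real.exp_zero, mul_one] at h
  rw [heq] at h
  rw [div_le_div_iff₀ hs ht]
  have h4 : s / t * Real.exp (t * x) * t = s * Real.exp (t * x) := by field_simp
  have h5 : (1 - s / t) * t = t - s := by field_simp
  nlinarith [mul_le_mul_of_nonneg_right h ht.le]

lemma aux_slope_ge {x s : ℝ} (hs : 0 < s) : x ≤ (Real.exp (s * x) - 1) / s := by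
  rw [le_div_iff₀ hs]
  nlinarith [Real.add_one_le_exp (s * x)]

lemma aux_exp_le {x s t : ℝ} (hs : 0 ≤ s) (hst : s ≤ t) :
    Real.exp (s * x) ≤ Real.exp (t * x) + 1 := by
  rcases le_or_gt 0 x with hx | hx
  · have : s * x ≤ t * x := mul_le_mul_of_nonneg_right hst hx
    nlinarith [Real.exp_le_exp.2 this]
  · have h0 : s * x ≤ 0 := mul_nonpos_of_nonneg_of_nonpos hs hx.le
    nlinarith [Real.exp_pos (t * x), Real.exp_le_one_iff.2 h0]

lemma aux_small {Ω : Type*} [MeasurableSpace Ω] (μ : Measure Ω) [IsProbabilityMeasure μ]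
    (X : Ω → ℝ) (hmeas : Measurable X)
    (hintX : Integrable X μ) (hEX : ∫ ω, X ω ∂μ < 0)
    {t₀ : ℝ} (ht₀ : 0 < t₀) (hint : Integrable (fun ω => Real.exp (t₀ * X ω)) μ)
    {b : ℝ} (hb : 0 < b) :
    ∃ t, 0 < t ∧ t < b ∧ t ≤ t₀ ∧ ∫ ω, Real.exp (t * X ω) ∂μ < 1 := by
  set s : ℕ → ℝ := fun n => t₀ / (n + 1) with hs_def
  have hs_pos : ∀ n, 0 < s n := fun n => div_pos ht₀ (by positivity)
  have hs_le : ∀ n, s n ≤ t₀ := fun n => by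
    rw [hs_def]
    exact div_le_self ht₀.le (by simp [le_add_iff_nonneg_left])
  have hs_tendsto : Tendsto s atTop (𝓝 0) := by
    apply Tendsto.div_atTop tendsto_const_nhds
    exact tendsto_atTop_add_const_right _ 1 tendsto_natCast_atTop_atTop
  have hint_s : ∀ n, Integrable (fun ω => Real.exp (s n * X ω)) μ := by
    intro n
    refine (hint.add (integrable_const 1)).mono
      ((hmeas.const_mul _).exp.aestronglyMeasurable) (Filter.Eventually.of_forall fun ω => ?_)
    rw [Real.norm_eq_abs, abs_of_pos (Real.exp_pos _), Real.norm_eq_abs]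
    refine le_trans (aux_exp_le (hs_pos n).le (hs_le n)) (le_abs_self _)
  have hH : Integrable (fun ω => |X ω| + |(Real.exp (t₀ * X ω) - 1) / t₀|) μ :=
    hintX.abs.add ((hint.sub (integrable_const 1)).div_const t₀).abs
  have hDCT : Tendsto (fun n => ∫ ω, (Real.exp (s n * X ω) - 1) / s n ∂μ) atTop
      (𝓝 (∫ ω, X ω ∂μ)) := by
    refine tendsto_integral_of_dominated_convergence _ ?_ hH ?_ ?_
    · intro n
      exact (((hmeas.const_mul _).exp.sub measurable_const).div_const _).aestronglyMeasurable
    · intro n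
      refine Filter.Eventually.of_forall fun ω => ?_
      rw [Real.norm_eq_abs, abs_le]
      constructor
      · have h1 := aux_slope_ge (x := X ω) (hs_pos n)
        have h2 : -|X ω| ≤ X ω := neg_abs_le _
        have h3 : (0:ℝ) ≤ |(Real.exp (t₀ * X ω) - 1) / t₀| := abs_nonneg _
        linarith
      · have h1 := aux_slope_mono (x := X ω) (hs_pos n) (hs_le n)
        have h2 := le_abs_self ((Real.exp (t₀ * X ω) - 1) / t₀)
        have h3 : (0:ℝ) ≤ |X ω| := abs_nonneg _
        linarith
    · refine Filter.Eventually.of_forall fun ω => ?_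
      have hd : HasDerivAt (fun u : ℝ => Real.exp (u * X ω)) (X ω) 0 := by
        have := ((hasDerivAt_id (0:ℝ)).mul_const (X ω)).exp
        simpa using this
      have hslope := hasDerivAt_iff_tendsto_slope.mp hd
      have hsn : Tendsto s atTop (𝓝[≠] (0:ℝ)) := by
        refine tendsto_nhdsWithin_of_tendsto_nhds_of_eventually_within _ hs_tendsto ?_
        exact Filter.Eventually.of_forall fun n => (hs_pos n).ne'
      have := hslope.comp hsn
      refine this.congr fun n => ?_
      simp [slope_def_field, div_eq_mul_inv, mul_comm]
  have hfin : ∀ᶠ n in atTop,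
      (∫ ω, (Real.exp (s n * X ω) - 1) / s n ∂μ) < 0 ∧ s n < b := by
    exact (hDCT.eventually_lt_const hEX).and (hs_tendsto.eventually_lt_const hb)
  obtain ⟨n, hn1, hn2⟩ := hfin.exists
  refine ⟨s n, hs_pos n, hn2, hs_le n, ?_⟩
  have hcomp : ∫ ω, (Real.exp (s n * X ω) - 1) / s n ∂μ
      = ((∫ ω, Real.exp (s n * X ω) ∂μ) - 1) / s n := by
    rw [integral_div, integral_sub (hint_s n) (integrable_const 1)]
    simp
  rw [hcomp] at hn1
  rcases (div_neg_iff).mp hn1 with ⟨h1, h2⟩ | ⟨h1, h2⟩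
  · exact absurd h2 (not_lt.2 (hs_pos n).le)
  · linarith

theorem stmt_16 {Ω : Type*} [MeasurableSpace Ω] (μ : Measure Ω) [IsProbabilityMeasure μ]
    (X : Ω → ℝ) (hmeas : Measurable X) (a : ℝ) (ha : 0 < a)
    (hintX : Integrable X μ) (hEX : ∫ ω, X ω ∂μ < 0)
    (hpos : 0 < μ {ω | 0 < X ω})
    (hmgf : ∀ t ∈ Set.Ico (0 : ℝ) a, Integrable (fun ω => Real.exp (t * X ω)) μ)
    (hlim : ∀ c : ℝ, c < 1 →
      ∀ᶠ t in nhdsWithin a (Set.Iio a), c ≤ ∫ ω, Real.exp (t * X ω) ∂μ) :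
    ∃! w : ℝ, w ∈ Set.Ioc 0 a ∧ ∫ ω, Real.exp (w * X ω) ∂μ = 1 := by
  have hone : ∀ u : ℝ, (∫ ω, Real.exp (u * X ω) ∂μ) = 1 →
      Integrable (fun ω => Real.exp (u * X ω)) μ := by
    intro u h
    by_contra hc
    rw [integral_undef hc] at h
    norm_num at h
  -- uniqueness
  have hkey : ∀ w₁ w₂ : ℝ, w₁ ∈ Set.Ioc 0 a → w₂ ∈ Set.Ioc 0 a →
      (∫ ω, Real.exp (w₁ * X ω) ∂μ) = 1 → (∫ ω, Real.exp (w₂ * X ω) ∂μ) = 1 →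
      ¬ (w₁ < w₂) := by
    rintro w₁ w₂ ⟨hw₁0, hw₁a⟩ ⟨hw₂0, hw₂a⟩ e1 e2 hlt
    obtain ⟨t, ht0, htw, -, htlt⟩ := aux_small μ X hmeas hintX hEX
      (t₀ := w₁ / 2) (by linarith) (hmgf _ ⟨by linarith, by linarith⟩) (b := w₁) hw₁0
    have hta : t < a := lt_of_lt_of_le htw hw₁a
    set l := (w₂ - w₁) / (w₂ - t) with hl
    have hne : w₂ - t ≠ 0 := by intro h; linarith [sub_eq_zero.mp h]
    have hl0 : 0 < l := div_pos (by linarith) (by linarith)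
    have hl1 : l < 1 := (div_lt_one (by linarith)).2 (by linarith)
    have hcombo : l * t + (1 - l) * w₂ = w₁ := by
      rw [hl]; field_simp; ring
    have hpt : ∀ ω, Real.exp (w₁ * X ω)
        ≤ l * Real.exp (t * X ω) + (1 - l) * Real.exp (w₂ * X ω) := fun ω => by
      rw [← hcombo]; exact aux_exp_combo hl0.le hl1.le
    have It : Integrable (fun ω => Real.exp (t * X ω)) μ := hmgf t ⟨ht0.le, hta⟩
    have Iw1 := hone w₁ e1
    have Iw2 := hone w₂ e2
    have Irhs : Integrable (fun ω => l * Real.exp (t * X ω)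
        + (1 - l) * Real.exp (w₂ * X ω)) μ := (It.const_mul l).add (Iw2.const_mul (1 - l))
    have hmono := integral_mono Iw1 Irhs (fun ω => hpt ω)
    rw [integral_add (It.const_mul l) (Iw2.const_mul (1 - l)), integral_const_mul,
      integral_const_mul, e1, e2] at hmono
    nlinarith
  have huniq : ∀ y w : ℝ, y ∈ Set.Ioc 0 a → w ∈ Set.Ioc 0 a →
      (∫ ω, Real.exp (y * X ω) ∂μ) = 1 → (∫ ω, Real.exp (w * X ω) ∂μ) = 1 → y = w := by
    intro y w hy hw ey ew
    rcases lt_trichotomy y w with h | h | h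
    · exact absurd h (hkey y w hy hw ey ew)
    · exact h
    · exact absurd h (hkey w y hw hy ew ey)
  -- continuity on (0, a)
  have hcont : ∀ t₀ ∈ Set.Ioo (0:ℝ) a,
      ContinuousAt (fun t => ∫ ω, Real.exp (t * X ω) ∂μ) t₀ := by
    rintro t₀ ⟨h0, hA⟩
    set u := (t₀ + a) / 2 with hu
    have hu1 : t₀ < u := by rw [hu]; linarith
    have hu2 : u < a := by rw [hu]; linarith
    refine continuousAt_of_dominated (bound := fun ω => Real.exp (u * X ω) + 1) ?_ ?_ ?_ ?_
    · exact Filter.Eventually.of_forall fun t => ((hmeas.const_mul t).exp).aestronglyMeasurable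
    · filter_upwards [Ioo_mem_nhds h0 hu1] with t ht
      refine Filter.Eventually.of_forall fun ω => ?_
      rw [Real.norm_eq_abs, abs_of_pos (Real.exp_pos _)]
      exact aux_exp_le ht.1.le ht.2.le
    · exact (hmgf u ⟨by linarith, hu2⟩).add (integrable_const 1)
    · exact Filter.Eventually.of_forall fun ω =>
        (Real.continuous_exp.comp (continuous_mul_right (X ω))).continuousAt
  -- a small point with mgf < 1
  obtain ⟨t₁, ht₁0, ht₁a, -, ht₁lt⟩ := aux_small μ X hmeas hintX hEX
    (t₀ := a / 2) (by linarith) (hmgf _ ⟨by linarith, by linarith⟩) (b := a) ha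
  -- existence
  have hex : ∃ w ∈ Set.Ioc (0:ℝ) a, ∫ ω, Real.exp (w * X ω) ∂μ = 1 := by
    by_cases hA : ∃ sp ∈ Set.Ioo (0:ℝ) a, 1 ≤ ∫ ω, Real.exp (sp * X ω) ∂μ
    · obtain ⟨sp, hsp, hfs⟩ := hA
      rcases le_total t₁ sp with hts | hts
      · have hco : ContinuousOn (fun t => ∫ ω, Real.exp (t * X ω) ∂μ) (Set.Icc t₁ sp) :=
          fun x hx => (hcont x ⟨lt_of_lt_of_le ht₁0 hx.1, lt_of_le_of_lt hx.2 hsp.2⟩).continuousWithinAt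
        obtain ⟨w, hw, hwe⟩ := intermediate_value_Icc hts hco ⟨ht₁lt.le, hfs⟩
        exact ⟨w, ⟨lt_of_lt_of_le ht₁0 hw.1, (lt_of_le_of_lt hw.2 hsp.2).le⟩, hwe⟩
      · have hco : ContinuousOn (fun t => ∫ ω, Real.exp (t * X ω) ∂μ) (Set.Icc sp t₁) :=
          fun x hx => (hcont x ⟨lt_of_lt_of_le hsp.1 hx.1, lt_of_le_of_lt hx.2 ht₁a⟩).continuousWithinAt
        obtain ⟨w, hw, hwe⟩ := intermediate_value_Icc' hts hco ⟨ht₁lt.le, hfs⟩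
        exact ⟨w, ⟨lt_of_lt_of_le hsp.1 hw.1, (lt_of_le_of_lt hw.2 ht₁a).le⟩, hwe⟩
    · push_neg at hA
      -- w = a works
      set t : ℕ → ℝ := fun n => a - a / (n + 2) with ht_def
      have ht_pos : ∀ n, 0 < t n := by
        intro n
        have hn2 : (0:ℝ) ≤ (n:ℝ) := Nat.cast_nonneg n
        have : a / (n + 2) < a := div_lt_self ha (by linarith)
        simp only [ht_def]; linarith
      have ht_lt : ∀ n, t n < a := by
        intro n
        have : 0 < a / (n + 2) := by positivity
        simp only [ht_def]; linarith
      have ht_mono : Monotone t := by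
        intro n m hnm
        simp only [ht_def]
        have : a / (m + 2) ≤ a / (n + 2) := by
          have : (n:ℝ) ≤ (m:ℝ) := Nat.cast_le.2 hnm
          gcongr <;> linarith [Nat.cast_nonneg (R := ℝ) n]
        linarith
      have ht_tendsto : Tendsto t atTop (𝓝 a) := by
        have h1 : Tendsto (fun n : ℕ => a / (n + 2)) atTop (𝓝 0) := by
          apply Tendsto.div_atTop tendsto_const_nhds
          exact tendsto_atTop_add_const_right _ 2 tendsto_natCast_atTop_atTop
        simpa using tendsto_const_nhds.sub h1
      set S : Set Ω := {ω | 0 ≤ X ω} with hS_def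
      have hS : MeasurableSet S := measurableSet_le measurable_const hmeas
      have hmct : Tendsto (fun n => ∫⁻ ω in S, ENNReal.ofReal (Real.exp (t n * X ω)) ∂μ)
          atTop (𝓝 (∫⁻ ω in S, ENNReal.ofReal (Real.exp (a * X ω)) ∂μ)) := by
        refine lintegral_tendsto_of_tendsto_of_monotone
          (fun n => ((hmeas.const_mul _).exp.ennreal_ofReal).aemeasurable) ?_ ?_
        · refine (ae_restrict_mem hS).mono fun ω hω => ?_
          intro n m hnm
          exact ENNReal.ofReal_le_ofReal (Real.exp_le_exp.2
            (mul_le_mul_of_nonneg_right (ht_mono hnm) hω))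
        · refine ae_of_all _ fun ω => ?_
          exact (ENNReal.continuous_ofReal.tendsto _).comp
            ((Real.continuous_exp.tendsto _).comp (ht_tendsto.mul_const _))
      have hdct : Tendsto (fun n => ∫⁻ ω in Sᶜ, ENNReal.ofReal (Real.exp (t n * X ω)) ∂μ)
          atTop (𝓝 (∫⁻ ω in Sᶜ, ENNReal.ofReal (Real.exp (a * X ω)) ∂μ)) := by
        refine tendsto_lintegral_of_dominated_convergence (fun _ => 1)
          (fun n => (hmeas.const_mul _).exp.ennreal_ofReal) ?_ ?_ ?_
        · intro n
          refine (ae_restrict_mem hS.compl).mono fun ω hω => ?_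
          have hω' : X ω < 0 := by simpa [hS_def] using hω
          have hle : t n * X ω ≤ 0 := mul_nonpos_of_nonneg_of_nonpos (ht_pos n).le hω'.le
          exact ENNReal.ofReal_le_one.2 (Real.exp_le_one_iff.2 hle)
        · simp [lintegral_one]
        · refine ae_of_all _ fun ω => ?_
          exact (ENNReal.continuous_ofReal.tendsto _).comp
            ((Real.continuous_exp.tendsto _).comp (ht_tendsto.mul_const _))
      have hsplit : ∀ u : ℝ, ∫⁻ ω, ENNReal.ofReal (Real.exp (u * X ω)) ∂μ
          = (∫⁻ ω in S, ENNReal.ofReal (Real.exp (u * X ω)) ∂μ)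
            + ∫⁻ ω in Sᶜ, ENNReal.ofReal (Real.exp (u * X ω)) ∂μ :=
        fun u => (lintegral_add_compl _ hS).symm
      have hboundn : ∀ n, (∫⁻ ω in S, ENNReal.ofReal (Real.exp (t n * X ω)) ∂μ)
          + (∫⁻ ω in Sᶜ, ENNReal.ofReal (Real.exp (t n * X ω)) ∂μ) ≤ 1 := by
        intro n
        rw [← hsplit]
        rw [← ofReal_integral_eq_lintegral_ofReal (hmgf _ ⟨(ht_pos n).le, ht_lt n⟩)
          (ae_of_all _ fun ω => (Real.exp_pos _).le)]
        exact ENNReal.ofReal_le_one.2 (hA (t n) ⟨ht_pos n, ht_lt n⟩).le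
      have hlimle : (∫⁻ ω in S, ENNReal.ofReal (Real.exp (a * X ω)) ∂μ)
          + (∫⁻ ω in Sᶜ, ENNReal.ofReal (Real.exp (a * X ω)) ∂μ) ≤ 1 :=
        le_of_tendsto (hmct.add hdct) (Filter.Eventually.of_forall hboundn)
      have htot_ne : (∫⁻ ω, ENNReal.ofReal (Real.exp (a * X ω)) ∂μ) ≠ ⊤ := by
        rw [hsplit a]
        exact (lt_of_le_of_lt hlimle ENNReal.one_lt_top).ne
      have hfeq : ∀ u : ℝ, ∫ ω, Real.exp (u * X ω) ∂μ
          = (∫⁻ ω, ENNReal.ofReal (Real.exp (u * X ω)) ∂μ).toReal := fun u =>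
        integral_eq_lintegral_of_nonneg_ae (ae_of_all _ fun ω => (Real.exp_pos _).le)
          ((hmeas.const_mul u).exp.aestronglyMeasurable)
      have hsum_ne : (∫⁻ ω in S, ENNReal.ofReal (Real.exp (a * X ω)) ∂μ)
          + (∫⁻ ω in Sᶜ, ENNReal.ofReal (Real.exp (a * X ω)) ∂μ) ≠ ⊤ :=
        (lt_of_le_of_lt hlimle ENNReal.one_lt_top).ne
      have htendsto_f : Tendsto (fun n => ∫ ω, Real.exp (t n * X ω) ∂μ) atTop
          (𝓝 (∫ ω, Real.exp (a * X ω) ∂μ)) := by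
        have h2 := (ENNReal.tendsto_toReal hsum_ne).comp (hmct.add hdct)
        have he1 : ∀ n, ∫ ω, Real.exp (t n * X ω) ∂μ
            = ((∫⁻ ω in S, ENNReal.ofReal (Real.exp (t n * X ω)) ∂μ)
              + ∫⁻ ω in Sᶜ, ENNReal.ofReal (Real.exp (t n * X ω)) ∂μ).toReal := fun n => by
          rw [hfeq, hsplit]
        have he2 : ∫ ω, Real.exp (a * X ω) ∂μ
            = ((∫⁻ ω in S, ENNReal.ofReal (Real.exp (a * X ω)) ∂μ)
              + ∫⁻ ω in Sᶜ, ENNReal.ofReal (Real.exp (a * X ω)) ∂μ).toReal := by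
          rw [hfeq, hsplit]
        rw [he2]
        exact Filter.Tendsto.congr (fun n => (he1 n).symm) h2
      have hfa_le : (∫ ω, Real.exp (a * X ω) ∂μ) ≤ 1 :=
        le_of_tendsto htendsto_f (Filter.Eventually.of_forall fun n =>
          (hA _ ⟨ht_pos n, ht_lt n⟩).le)
      have hta_in : Tendsto t atTop (𝓝[<] a) :=
        tendsto_nhdsWithin_of_tendsto_nhds_of_eventually_within _ ht_tendsto
          (Filter.Eventually.of_forall fun n => ht_lt n)
      have hfa_ge : 1 ≤ ∫ ω, Real.exp (a * X ω) ∂μ := by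
        by_contra h
        push_neg at h
        have hc : (∫ ω, Real.exp (a * X ω) ∂μ + 1) / 2 < 1 := by linarith
        have h2 := hta_in.eventually (hlim _ hc)
        have h3 := ge_of_tendsto htendsto_f h2
        linarith
      exact ⟨a, ⟨ha, le_refl a⟩, le_antisymm hfa_le hfa_ge⟩
  obtain ⟨w, hw1, hw2⟩ := hex
  exact ⟨w, ⟨hw1, hw2⟩, fun y hy => huniq y w hy.1 hw1 hy.2 hw2⟩
end

section
/- Let (X_n) be a causal Bernoulli shift X_n = H(ξ_{n−j}, j ∈ ℕ) with i.i.d. innovations (ξ_n), and continuity coefficients d_n = ‖sup_u |H(ξ_n, …, ξ_1, ξ_0, ξ_{−1}, …) − H(ξ_n, …, ξ_1, u_0, u_{−1}, …)|‖_∞ satisfying D = ∑_{j≥0} d_j < ∞. Then for all t ≥ 0 and n, m ≥ 1, E[e^{t S_{n+m}}] ≤ e^{4tD} E[e^{t S_n}] E[e^{t S_m}], where S_n = ∑_{j=1}^n X_j; consequently c(t) = lim_n (1/n) log E[e^{t S_n}] exists and is finite whenever the exponential moments are finite. -/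
set_option maxHeartbeats 1000000
open MeasureTheory

lemma aux_map_pi {Ω : Type*} [MeasurableSpace Ω] (μ : Measure Ω) [IsProbabilityMeasure μ]
    (ξ : ℤ → Ω → ℝ) (hξmeas : ∀ i, Measurable (ξ i))
    (hindep : ProbabilityTheory.iIndepFun ξ μ)
    (hident : ∀ i j : ℤ, Measure.map (ξ i) μ = Measure.map (ξ j) μ)
    (m : ℕ) (s : ℤ) :
    Measure.map (fun ω (k : Fin m) => ξ (s + 1 + (k : ℤ)) ω) μ
      = Measure.pi (fun _ : Fin m => Measure.map (ξ 0) μ) := by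
  classical
  haveI : IsProbabilityMeasure (Measure.map (ξ 0) μ) :=
    Measure.isProbabilityMeasure_map (hξmeas 0).aemeasurable
  have hΦ : Measurable (fun ω (k : Fin m) => ξ (s + 1 + (k : ℤ)) ω) :=
    measurable_pi_lambda _ fun k => hξmeas _
  refine (Measure.pi_eq fun A hA => ?_).symm
  rw [Measure.map_apply hΦ (MeasurableSet.univ_pi hA)]
  set AZ : ℤ → Set ℝ := fun z =>
    if h : (z - (s + 1)).toNat < m ∧ s + 1 ≤ z then A ⟨(z - (s + 1)).toNat, h.1⟩ else Set.univ
    with hAZ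
  have hAZmeas : ∀ z, MeasurableSet (AZ z) := by
    intro z; rw [hAZ]; dsimp only
    split_ifs with h
    · exact hA _
    · exact MeasurableSet.univ
  have hAZe : ∀ k : Fin m, AZ (s + 1 + (k : ℤ)) = A k := by
    intro k
    rw [hAZ]; dsimp only
    rw [dif_pos ⟨by omega, by omega⟩]
    have hk : (s + 1 + (k : ℤ) - (s + 1)).toNat = (k : ℕ) := by omega
    simp only [hk, Fin.eta]
  have hinj : Set.InjOn (fun k : Fin m => s + 1 + (k : ℤ)) (Finset.univ : Finset (Fin m)) := by
    intro a _ b _ hab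
    simp only at hab
    exact Fin.ext (by omega)
  have hpre : (fun ω (k : Fin m) => ξ (s + 1 + (k : ℤ)) ω) ⁻¹' Set.pi Set.univ A
      = ⋂ k ∈ (Finset.univ : Finset (Fin m)), ξ (s + 1 + (k : ℤ)) ⁻¹' A k := by
    ext ω; simp [Set.mem_pi]
  have key := hindep.meas_biInter
    (S := Finset.image (fun k : Fin m => s + 1 + (k : ℤ)) Finset.univ)
    (s := fun z => ξ z ⁻¹' AZ z) (fun i _ => ⟨AZ i, hAZmeas i, rfl⟩)
  rw [Finset.set_biInter_finset_image] at key
  rw [Finset.prod_image hinj] at key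
  simp only [hAZe] at key
  rw [hpre, key]
  refine Finset.prod_congr rfl fun k _ => ?_
  rw [← Measure.map_apply (hξmeas _) (hA k), hident (s + 1 + (k : ℤ)) 0]

lemma aux_d_nonneg {H : (ℕ → ℝ) → ℝ} {d : ℕ → ℝ}
    (hd : ∀ (k : ℕ) (x y : ℕ → ℝ), (∀ j < k, x j = y j) → |H x - H y| ≤ d k) (k : ℕ) :
    0 ≤ d k := by
  have := hd k (fun _ => 0) (fun _ => 0) (fun _ _ => rfl)
  simpa using this

lemma aux_H_bdd {H : (ℕ → ℝ) → ℝ} {d : ℕ → ℝ}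
    (hd : ∀ (k : ℕ) (x y : ℕ → ℝ), (∀ j < k, x j = y j) → |H x - H y| ≤ d k) (x : ℕ → ℝ) :
    |H x| ≤ |H (fun _ => 0)| + d 0 := by
  have h := hd 0 x (fun _ => 0) (fun j hj => absurd hj (Nat.not_lt_zero j))
  calc |H x| = |(H x - H (fun _ => 0)) + H (fun _ => 0)| := by ring_nf
    _ ≤ |H x - H (fun _ => 0)| + |H (fun _ => 0)| := abs_add_le _ _
    _ ≤ |H (fun _ => 0)| + d 0 := by linarith

lemma aux_int {Ω : Type*} [MeasurableSpace Ω] (μ : Measure Ω) [IsProbabilityMeasure μ]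
    {t : ℝ} (ht : 0 ≤ t) (f : Ω → ℝ) (c : ℝ) (hf : Measurable f) (hc : ∀ ω, |f ω| ≤ c) :
    Integrable (fun ω => Real.exp (t * f ω)) μ := by
  refine Integrable.mono' (integrable_const (Real.exp (t * c))) ?_ ?_
  · exact ((hf.const_mul t).exp).aestronglyMeasurable
  · refine Filter.Eventually.of_forall fun ω => ?_
    rw [Real.norm_eq_abs, abs_of_pos (Real.exp_pos _)]
    exact Real.exp_le_exp.mpr (mul_le_mul_of_nonneg_left ((abs_le.1 (hc ω)).2) ht)

lemma aux_exp_le_s18 {Ω : Type*} [MeasurableSpace Ω] (μ : Measure Ω) [IsProbabilityMeasure μ]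
    {t D : ℝ} (ht : 0 ≤ t) (f g : Ω → ℝ) (hfg : ∀ ω, f ω ≤ g ω + D)
    (hfInt : Integrable (fun ω => Real.exp (t * f ω)) μ)
    (hgInt : Integrable (fun ω => Real.exp (t * g ω)) μ) :
    ∫ ω, Real.exp (t * f ω) ∂μ ≤ Real.exp (t * D) * ∫ ω, Real.exp (t * g ω) ∂μ := by
  rw [← integral_const_mul]
  refine integral_mono hfInt (hgInt.const_mul _) fun ω => ?_
  rw [← Real.exp_add]
  refine Real.exp_le_exp.mpr ?_
  have := mul_le_mul_of_nonneg_left (hfg ω) ht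
  rw [mul_add] at this
  linarith

lemma aux_key {Ω : Type*} [MeasurableSpace Ω] (μ : Measure Ω) [IsProbabilityMeasure μ]
    (ξ : ℤ → Ω → ℝ) (hξmeas : ∀ i, Measurable (ξ i))
    (hindep : ProbabilityTheory.iIndepFun ξ μ)
    (hident : ∀ i j : ℤ, Measure.map (ξ i) μ = Measure.map (ξ j) μ)
    (H : (ℕ → ℝ) → ℝ) (hH : Measurable H)
    (X : ℤ → Ω → ℝ) (hX : ∀ n ω, X n ω = H (fun j => ξ (n - (j : ℤ)) ω))
    (d : ℕ → ℝ) (hd_sum : Summable d)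
    (hd : ∀ (k : ℕ) (x y : ℕ → ℝ), (∀ j < k, x j = y j) → |H x - H y| ≤ d k)
    (D : ℝ) (hD : D = ∑' j, d j)
    (t : ℝ) (ht : 0 ≤ t) (n m : ℕ) :
    ∫ ω, Real.exp (t * ∑ j ∈ Finset.Icc 1 (n + m), X (j : ℤ) ω) ∂μ
      ≤ Real.exp (4 * t * D)
          * (∫ ω, Real.exp (t * ∑ j ∈ Finset.Icc 1 n, X (j : ℤ) ω) ∂μ)
          * ∫ ω, Real.exp (t * ∑ j ∈ Finset.Icc 1 m, X (j : ℤ) ω) ∂μ := by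
  classical
  set W : ℤ → ℕ → Ω → ℝ := fun s j ω => H (fun i => if i < j then ξ (s + (j:ℤ) - (i:ℤ)) ω else 0)
    with hWdef
  have hWmeas : ∀ s j, Measurable (W s j) := by
    intro s j; rw [hWdef]
    exact hH.comp (measurable_pi_lambda _ fun i => by
      split_ifs
      · exact hξmeas _
      · exact measurable_const)
  have hXmeas : ∀ z : ℤ, Measurable (X z) := by
    intro z
    have hz : X z = fun ω => H (fun i => ξ (z - (i:ℤ)) ω) := funext fun ω => hX z ω
    rw [hz]; exact hH.comp (measurable_pi_lambda _ fun i => hξmeas _)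
  set C : ℝ := |H (fun _ => 0)| + d 0 with hC
  have hXb : ∀ (z : ℤ) ω, |X z ω| ≤ C := fun z ω => by rw [hX]; exact aux_H_bdd hd _
  have hWb : ∀ s j ω, |W s j ω| ≤ C := fun s j ω => aux_H_bdd hd _
  have hWd : ∀ (s : ℤ) (j : ℕ) ω, |X (s + (j:ℤ)) ω - W s j ω| ≤ d j := by
    intro s j ω; rw [hX, hWdef]
    refine hd j _ _ fun i hi => ?_
    simp only [if_pos hi]
  have habs : ∀ (s : ℤ) (k : ℕ) ω,
      |(∑ j ∈ Finset.Icc 1 k, X (s + (j:ℤ)) ω) - ∑ j ∈ Finset.Icc 1 k, W s j ω| ≤ D := by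
    intro s k ω
    rw [← Finset.sum_sub_distrib]
    refine le_trans (Finset.abs_sum_le_sum_abs _ _) (le_trans
      (Finset.sum_le_sum fun j _ => hWd s j ω)
      (hD ▸ Summable.sum_le_tsum _ (fun j _ => aux_d_nonneg hd j) hd_sum))
  have hX0 : ∀ (k : ℕ) ω,
      |(∑ j ∈ Finset.Icc 1 k, X (j:ℤ) ω) - ∑ j ∈ Finset.Icc 1 k, W 0 j ω| ≤ D := by
    intro k ω
    have h := habs 0 k ω
    simpa only [zero_add] using h
  have hsumb : ∀ (F : Finset ℕ) (f : ℕ → Ω → ℝ), (∀ j ω, |f j ω| ≤ C) →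
      ∀ ω, |∑ j ∈ F, f j ω| ≤ (F.card : ℝ) * C := by
    intro F f hf ω
    refine le_trans (Finset.abs_sum_le_sum_abs _ _) ?_
    have h := Finset.sum_le_card_nsmul F (fun j => |f j ω|) C (fun j _ => hf j ω)
    simpa [nsmul_eq_mul] using h
  have hMsum : ∀ (k : ℕ) (f : ℕ → Ω → ℝ), (∀ j, Measurable (f j)) →
      Measurable (fun ω => ∑ j ∈ Finset.Icc 1 k, f j ω) :=
    fun k f hf => Finset.measurable_sum _ fun j _ => hf j
  -- splitting of the sum
  have hIcc : ∀ k : ℕ, Finset.Icc 1 k = Finset.Ioc 0 k := by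
    intro k; ext x; simp [Finset.mem_Icc, Finset.mem_Ioc]; omega
  have hsplit : ∀ ω, ∑ j ∈ Finset.Icc 1 (n + m), X (j:ℤ) ω
      = (∑ j ∈ Finset.Icc 1 n, X (j:ℤ) ω) + ∑ j ∈ Finset.Icc 1 m, X ((n:ℤ) + (j:ℤ)) ω := by
    intro ω
    rw [hIcc, hIcc, hIcc, ← Finset.sum_Ioc_consecutive (fun j : ℕ => X (j:ℤ) ω)
      (Nat.zero_le n) (Nat.le_add_right n m)]
    congr 1
    have h1 : Finset.Ioc n (n + m) = Finset.map (addLeftEmbedding n) (Finset.Ioc 0 m) := by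
      rw [Finset.map_add_left_Ioc]; simp
    rw [h1, Finset.sum_map]
    refine Finset.sum_congr rfl fun j hj => ?_
    have h2 : (addLeftEmbedding n) j = n + j := rfl
    have h3 : ((n + j : ℕ) : ℤ) = (n:ℤ) + (j:ℤ) := by push_cast; ring
    rw [h2, h3]
  -- integrability
  have intNM : Integrable (fun ω => Real.exp (t * ∑ j ∈ Finset.Icc 1 (n+m), X (j:ℤ) ω)) μ :=
    aux_int μ ht _ _ (hMsum _ _ fun j => hXmeas _) (hsumb _ _ fun j ω => hXb _ ω)
  have intA : Integrable (fun ω => Real.exp (t * ∑ j ∈ Finset.Icc 1 n, X (j:ℤ) ω)) μ :=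
    aux_int μ ht _ _ (hMsum _ _ fun j => hXmeas _) (hsumb _ _ fun j ω => hXb _ ω)
  have intM : Integrable (fun ω => Real.exp (t * ∑ j ∈ Finset.Icc 1 m, X (j:ℤ) ω)) μ :=
    aux_int μ ht _ _ (hMsum _ _ fun j => hXmeas _) (hsumb _ _ fun j ω => hXb _ ω)
  have intA' : Integrable (fun ω => Real.exp (t * ∑ j ∈ Finset.Icc 1 n, W 0 j ω)) μ :=
    aux_int μ ht _ _ (hMsum _ _ fun j => hWmeas _ _) (hsumb _ _ fun j ω => hWb _ _ ω)
  have intM' : Integrable (fun ω => Real.exp (t * ∑ j ∈ Finset.Icc 1 m, W 0 j ω)) μ :=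
    aux_int μ ht _ _ (hMsum _ _ fun j => hWmeas _ _) (hsumb _ _ fun j ω => hWb _ _ ω)
  have intB' : Integrable (fun ω => Real.exp (t * ∑ j ∈ Finset.Icc 1 m, W (n:ℤ) j ω)) μ :=
    aux_int μ ht _ _ (hMsum _ _ fun j => hWmeas _ _) (hsumb _ _ fun j ω => hWb _ _ ω)
  have intAB' : Integrable (fun ω => Real.exp (t * ((∑ j ∈ Finset.Icc 1 n, X (j:ℤ) ω)
      + ∑ j ∈ Finset.Icc 1 m, W (n:ℤ) j ω))) μ := by
    refine aux_int μ ht _ (((Finset.Icc 1 n).card : ℝ) * C + ((Finset.Icc 1 m).card : ℝ) * C)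
      ((hMsum _ _ fun j => hXmeas _).add (hMsum _ _ fun j => hWmeas _ _)) fun ω => ?_
    exact le_trans (abs_add_le _ _) (add_le_add (hsumb _ _ (fun j ω => hXb _ ω) ω)
      (hsumb _ _ (fun j ω => hWb _ _ ω) ω))
  have intA'B' : Integrable (fun ω => Real.exp (t * ((∑ j ∈ Finset.Icc 1 n, W 0 j ω)
      + ∑ j ∈ Finset.Icc 1 m, W (n:ℤ) j ω))) μ := by
    refine aux_int μ ht _ (((Finset.Icc 1 n).card : ℝ) * C + ((Finset.Icc 1 m).card : ℝ) * C)
      ((hMsum _ _ fun j => hWmeas _ _).add (hMsum _ _ fun j => hWmeas _ _)) fun ω => ?_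
    exact le_trans (abs_add_le _ _) (add_le_add (hsumb _ _ (fun j ω => hWb _ _ ω) ω)
      (hsumb _ _ (fun j ω => hWb _ _ ω) ω))
  -- independence
  set S : Finset ℤ := Finset.Icc 1 (n:ℤ) with hSdef
  set T : Finset ℤ := Finset.Icc ((n:ℤ)+1) ((n:ℤ)+(m:ℤ)) with hTdef
  have hdisj : Disjoint S T := by
    rw [Finset.disjoint_left]
    intro a ha hb
    rw [hSdef, Finset.mem_Icc] at ha
    rw [hTdef, Finset.mem_Icc] at hb
    omega
  set φ : ({x // x ∈ S} → ℝ) → ℝ := fun v => Real.exp (t * ∑ j ∈ Finset.Icc 1 n,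
      H (fun i => if h : ((j:ℤ) - (i:ℤ)) ∈ S ∧ i < j then v ⟨(j:ℤ) - (i:ℤ), h.1⟩ else 0))
    with hφdef
  set ψ : ({x // x ∈ T} → ℝ) → ℝ := fun v => Real.exp (t * ∑ j ∈ Finset.Icc 1 m,
      H (fun i => if h : ((n:ℤ) + (j:ℤ) - (i:ℤ)) ∈ T ∧ i < j
        then v ⟨(n:ℤ) + (j:ℤ) - (i:ℤ), h.1⟩ else 0))
    with hψdef
  have hφmeas : Measurable φ := by
    rw [hφdef]
    refine Measurable.exp (Measurable.const_mul (Finset.measurable_sum _ fun j _ =>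
      hH.comp (measurable_pi_lambda _ fun i => ?_)) t)
    split_ifs with h
    · exact measurable_pi_apply _
    · exact measurable_const
  have hψmeas : Measurable ψ := by
    rw [hψdef]
    refine Measurable.exp (Measurable.const_mul (Finset.measurable_sum _ fun j _ =>
      hH.comp (measurable_pi_lambda _ fun i => ?_)) t)
    split_ifs with h
    · exact measurable_pi_apply _
    · exact measurable_const
  have hφeq : (φ ∘ fun a (i : {x // x ∈ S}) => ξ (i : ℤ) a)
      = fun ω => Real.exp (t * ∑ j ∈ Finset.Icc 1 n, W 0 j ω) := by
    funext ω
    have hsum : ∀ j ∈ Finset.Icc 1 n,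
        H (fun i => if h : ((j:ℤ) - (i:ℤ)) ∈ S ∧ i < j
            then (fun i : {x // x ∈ S} => ξ (i : ℤ) ω) ⟨(j:ℤ) - (i:ℤ), h.1⟩ else 0)
          = W 0 j ω := by
      intro j hj
      rw [Finset.mem_Icc] at hj
      rw [hWdef]
      refine congrArg H (funext fun i => ?_)
      by_cases hij : i < j
      · rw [dif_pos ⟨by rw [hSdef, Finset.mem_Icc]; omega, hij⟩, if_pos hij]
        exact congrArg (fun z => ξ z ω) (by omega : (j:ℤ) - (i:ℤ) = 0 + (j:ℤ) - (i:ℤ))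
      · rw [dif_neg (fun hcon => hij hcon.2), if_neg hij]
    simp only [Function.comp_apply, hφdef]
    rw [Finset.sum_congr rfl hsum]
  have hψeq : (ψ ∘ fun a (i : {x // x ∈ T}) => ξ (i : ℤ) a)
      = fun ω => Real.exp (t * ∑ j ∈ Finset.Icc 1 m, W (n:ℤ) j ω) := by
    funext ω
    have hsum : ∀ j ∈ Finset.Icc 1 m,
        H (fun i => if h : ((n:ℤ) + (j:ℤ) - (i:ℤ)) ∈ T ∧ i < j
            then (fun i : {x // x ∈ T} => ξ (i : ℤ) ω) ⟨(n:ℤ) + (j:ℤ) - (i:ℤ), h.1⟩ else 0)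
          = W (n:ℤ) j ω := by
      intro j hj
      rw [Finset.mem_Icc] at hj
      rw [hWdef]
      refine congrArg H (funext fun i => ?_)
      by_cases hij : i < j
      · rw [dif_pos ⟨by rw [hTdef, Finset.mem_Icc]; omega, hij⟩, if_pos hij]
      · rw [dif_neg (fun hcon => hij hcon.2), if_neg hij]
    simp only [Function.comp_apply, hψdef]
    rw [Finset.sum_congr rfl hsum]
  have hIndepWW : ProbabilityTheory.IndepFun
      (fun ω => Real.exp (t * ∑ j ∈ Finset.Icc 1 n, W 0 j ω))
      (fun ω => Real.exp (t * ∑ j ∈ Finset.Icc 1 m, W (n:ℤ) j ω)) μ := by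
    have h := (hindep.indepFun_finset S T hdisj hξmeas).comp hφmeas hψmeas
    rwa [hφeq, hψeq] at h
  have hmul : ∫ ω, Real.exp (t * ((∑ j ∈ Finset.Icc 1 n, W 0 j ω)
        + ∑ j ∈ Finset.Icc 1 m, W (n:ℤ) j ω)) ∂μ
      = (∫ ω, Real.exp (t * ∑ j ∈ Finset.Icc 1 n, W 0 j ω) ∂μ)
        * ∫ ω, Real.exp (t * ∑ j ∈ Finset.Icc 1 m, W (n:ℤ) j ω) ∂μ := by
    have h1 : (fun ω => Real.exp (t * ((∑ j ∈ Finset.Icc 1 n, W 0 j ω)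
          + ∑ j ∈ Finset.Icc 1 m, W (n:ℤ) j ω)))
        = fun ω => Real.exp (t * ∑ j ∈ Finset.Icc 1 n, W 0 j ω)
            * Real.exp (t * ∑ j ∈ Finset.Icc 1 m, W (n:ℤ) j ω) := by
      funext ω; rw [mul_add, Real.exp_add]
    rw [show (∫ ω, Real.exp (t * ((∑ j ∈ Finset.Icc 1 n, W 0 j ω)
          + ∑ j ∈ Finset.Icc 1 m, W (n:ℤ) j ω)) ∂μ)
        = ∫ ω, Real.exp (t * ∑ j ∈ Finset.Icc 1 n, W 0 j ω)
            * Real.exp (t * ∑ j ∈ Finset.Icc 1 m, W (n:ℤ) j ω) ∂μ from by rw [h1]]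
    exact ProbabilityTheory.IndepFun.integral_mul_eq_mul_integral hIndepWW intA'.aestronglyMeasurable intB'.aestronglyMeasurable
  -- stationarity: the law of the truncated block does not depend on the shift
  have hdist : (∫ ω, Real.exp (t * ∑ j ∈ Finset.Icc 1 m, W (n:ℤ) j ω) ∂μ)
      = ∫ ω, Real.exp (t * ∑ j ∈ Finset.Icc 1 m, W 0 j ω) ∂μ := by
    set g : (Fin m → ℝ) → ℝ := fun v => Real.exp (t * ∑ j ∈ Finset.Icc 1 m,
        H (fun i => if h : j - 1 - i < m ∧ i < j then v ⟨j - 1 - i, h.1⟩ else 0)) with hgdef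
    have hgmeas : Measurable g := by
      rw [hgdef]
      refine Measurable.exp (Measurable.const_mul (Finset.measurable_sum _ fun j _ =>
        hH.comp (measurable_pi_lambda _ fun i => ?_)) t)
      split_ifs with h
      · exact measurable_pi_apply _
      · exact measurable_const
    have hgΦ : ∀ (s : ℤ) ω, g (fun k : Fin m => ξ (s + 1 + (k:ℤ)) ω)
        = Real.exp (t * ∑ j ∈ Finset.Icc 1 m, W s j ω) := by
      intro s ω
      have hsum : ∀ j ∈ Finset.Icc 1 m,
          H (fun i => if h : j - 1 - i < m ∧ i < j
              then (fun k : Fin m => ξ (s + 1 + (k:ℤ)) ω) ⟨j - 1 - i, h.1⟩ else 0)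
            = W s j ω := by
        intro j hj
        rw [Finset.mem_Icc] at hj
        rw [hWdef]
        refine congrArg H (funext fun i => ?_)
        by_cases hij : i < j
        · rw [dif_pos ⟨by omega, hij⟩, if_pos hij]
          exact congrArg (fun z => ξ z ω)
            (by omega : s + 1 + ((j - 1 - i : ℕ) : ℤ) = s + (j:ℤ) - (i:ℤ))
        · rw [dif_neg (fun hcon => hij hcon.2), if_neg hij]
      simp only [hgdef]
      rw [Finset.sum_congr rfl hsum]
    have hΦmeas : ∀ s : ℤ, Measurable (fun ω (k : Fin m) => ξ (s + 1 + (k:ℤ)) ω) :=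
      fun s => measurable_pi_lambda _ fun k => hξmeas _
    calc (∫ ω, Real.exp (t * ∑ j ∈ Finset.Icc 1 m, W (n:ℤ) j ω) ∂μ)
        = ∫ ω, g (fun k : Fin m => ξ ((n:ℤ) + 1 + (k:ℤ)) ω) ∂μ :=
          integral_congr_ae (Filter.Eventually.of_forall fun ω => (hgΦ (n:ℤ) ω).symm)
      _ = ∫ v, g v ∂(Measure.map (fun ω (k : Fin m) => ξ ((n:ℤ) + 1 + (k:ℤ)) ω) μ) :=
          (integral_map (hΦmeas (n:ℤ)).aemeasurable hgmeas.aestronglyMeasurable).symm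
      _ = ∫ v, g v ∂(Measure.map (fun ω (k : Fin m) => ξ ((0:ℤ) + 1 + (k:ℤ)) ω) μ) := by
          rw [aux_map_pi μ ξ hξmeas hindep hident m (n:ℤ),
            aux_map_pi μ ξ hξmeas hindep hident m (0:ℤ)]
      _ = ∫ ω, g (fun k : Fin m => ξ ((0:ℤ) + 1 + (k:ℤ)) ω) ∂μ :=
          integral_map (hΦmeas (0:ℤ)).aemeasurable hgmeas.aestronglyMeasurable
      _ = ∫ ω, Real.exp (t * ∑ j ∈ Finset.Icc 1 m, W 0 j ω) ∂μ :=
          integral_congr_ae (Filter.Eventually.of_forall fun ω => hgΦ (0:ℤ) ω)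
  -- chain of inequalities
  have step1 : ∫ ω, Real.exp (t * ∑ j ∈ Finset.Icc 1 (n+m), X (j:ℤ) ω) ∂μ
      ≤ Real.exp (t * D) * ∫ ω, Real.exp (t * ((∑ j ∈ Finset.Icc 1 n, X (j:ℤ) ω)
          + ∑ j ∈ Finset.Icc 1 m, W (n:ℤ) j ω)) ∂μ := by
    refine aux_exp_le_s18 μ ht _ _ (fun ω => ?_) intNM intAB'
    rw [hsplit ω]
    have h := abs_le.mp (habs (n:ℤ) m ω)
    linarith [h.2]
  have step2 : ∫ ω, Real.exp (t * ((∑ j ∈ Finset.Icc 1 n, X (j:ℤ) ω)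
        + ∑ j ∈ Finset.Icc 1 m, W (n:ℤ) j ω)) ∂μ
      ≤ Real.exp (t * D) * ∫ ω, Real.exp (t * ((∑ j ∈ Finset.Icc 1 n, W 0 j ω)
          + ∑ j ∈ Finset.Icc 1 m, W (n:ℤ) j ω)) ∂μ := by
    refine aux_exp_le_s18 μ ht _ _ (fun ω => ?_) intAB' intA'B'
    have h := abs_le.mp (hX0 n ω)
    linarith [h.2]
  have step4 : ∫ ω, Real.exp (t * ∑ j ∈ Finset.Icc 1 n, W 0 j ω) ∂μ
      ≤ Real.exp (t * D) * ∫ ω, Real.exp (t * ∑ j ∈ Finset.Icc 1 n, X (j:ℤ) ω) ∂μ := by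
    refine aux_exp_le_s18 μ ht _ _ (fun ω => ?_) intA' intA
    have h := abs_le.mp (hX0 n ω)
    linarith [h.1]
  have step5 : ∫ ω, Real.exp (t * ∑ j ∈ Finset.Icc 1 m, W 0 j ω) ∂μ
      ≤ Real.exp (t * D) * ∫ ω, Real.exp (t * ∑ j ∈ Finset.Icc 1 m, X (j:ℤ) ω) ∂μ := by
    refine aux_exp_le_s18 μ ht _ _ (fun ω => ?_) intM' intM
    have h := abs_le.mp (hX0 m ω)
    linarith [h.1]
  have hnnA' : 0 ≤ ∫ ω, Real.exp (t * ∑ j ∈ Finset.Icc 1 n, W 0 j ω) ∂μ :=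
    integral_nonneg fun ω => (Real.exp_pos _).le
  have hnnM' : 0 ≤ ∫ ω, Real.exp (t * ∑ j ∈ Finset.Icc 1 m, W 0 j ω) ∂μ :=
    integral_nonneg fun ω => (Real.exp_pos _).le
  have hnnM : 0 ≤ ∫ ω, Real.exp (t * ∑ j ∈ Finset.Icc 1 m, X (j:ℤ) ω) ∂μ :=
    integral_nonneg fun ω => (Real.exp_pos _).le
  have hnnA : 0 ≤ ∫ ω, Real.exp (t * ∑ j ∈ Finset.Icc 1 n, X (j:ℤ) ω) ∂μ :=
    integral_nonneg fun ω => (Real.exp_pos _).le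
  have hexp4 : Real.exp (4 * t * D)
      = Real.exp (t*D) * Real.exp (t*D) * (Real.exp (t*D) * Real.exp (t*D)) := by
    rw [← Real.exp_add, ← Real.exp_add]
    congr 1
    ring
  calc ∫ ω, Real.exp (t * ∑ j ∈ Finset.Icc 1 (n+m), X (j:ℤ) ω) ∂μ
      ≤ Real.exp (t * D) * ∫ ω, Real.exp (t * ((∑ j ∈ Finset.Icc 1 n, X (j:ℤ) ω)
          + ∑ j ∈ Finset.Icc 1 m, W (n:ℤ) j ω)) ∂μ := step1
    _ ≤ Real.exp (t * D) * (Real.exp (t * D)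
          * ∫ ω, Real.exp (t * ((∑ j ∈ Finset.Icc 1 n, W 0 j ω)
              + ∑ j ∈ Finset.Icc 1 m, W (n:ℤ) j ω)) ∂μ) :=
        mul_le_mul_of_nonneg_left step2 (Real.exp_pos _).le
    _ = Real.exp (t * D) * Real.exp (t * D)
          * ((∫ ω, Real.exp (t * ∑ j ∈ Finset.Icc 1 n, W 0 j ω) ∂μ)
            * ∫ ω, Real.exp (t * ∑ j ∈ Finset.Icc 1 m, W 0 j ω) ∂μ) := by
        rw [hmul, hdist]; ring
    _ ≤ Real.exp (t * D) * Real.exp (t * D)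
          * ((Real.exp (t * D) * ∫ ω, Real.exp (t * ∑ j ∈ Finset.Icc 1 n, X (j:ℤ) ω) ∂μ)
            * (Real.exp (t * D) * ∫ ω, Real.exp (t * ∑ j ∈ Finset.Icc 1 m, X (j:ℤ) ω) ∂μ)) := by
        refine mul_le_mul_of_nonneg_left
          (mul_le_mul step4 step5 hnnM' (mul_nonneg (Real.exp_pos _).le hnnA)) ?_
        exact mul_nonneg (Real.exp_pos _).le (Real.exp_pos _).le
    _ = Real.exp (4 * t * D)
          * (∫ ω, Real.exp (t * ∑ j ∈ Finset.Icc 1 n, X (j:ℤ) ω) ∂μ)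
          * ∫ ω, Real.exp (t * ∑ j ∈ Finset.Icc 1 m, X (j:ℤ) ω) ∂μ := by
        rw [hexp4]; ring

theorem stmt_18 {Ω : Type*} [MeasurableSpace Ω] (μ : Measure Ω) [IsProbabilityMeasure μ]
    (ξ : ℤ → Ω → ℝ) (hξmeas : ∀ i, Measurable (ξ i))
    (hindep : ProbabilityTheory.iIndepFun ξ μ)
    (hident : ∀ i j : ℤ, Measure.map (ξ i) μ = Measure.map (ξ j) μ)
    (H : (ℕ → ℝ) → ℝ) (hH : Measurable H)
    (X : ℤ → Ω → ℝ) (hX : ∀ n ω, X n ω = H (fun j => ξ (n - (j : ℤ)) ω))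
    (d : ℕ → ℝ) (hd_sum : Summable d)
    (hd : ∀ (k : ℕ) (x y : ℕ → ℝ), (∀ j < k, x j = y j) → |H x - H y| ≤ d k)
    (D : ℝ) (hD : D = ∑' j, d j)
    (t : ℝ) (ht : 0 ≤ t) :
    (∀ n m : ℕ, 1 ≤ n → 1 ≤ m →
      ∫ ω, Real.exp (t * ∑ j ∈ Finset.Icc 1 (n + m), X (j : ℤ) ω) ∂μ
        ≤ Real.exp (4 * t * D)
            * (∫ ω, Real.exp (t * ∑ j ∈ Finset.Icc 1 n, X (j : ℤ) ω) ∂μ)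
            * ∫ ω, Real.exp (t * ∑ j ∈ Finset.Icc 1 m, X (j : ℤ) ω) ∂μ) ∧
    ((∀ n : ℕ, Integrable (fun ω => Real.exp (t * ∑ j ∈ Finset.Icc 1 n, X (j : ℤ) ω)) μ) →
      ∃ c : ℝ, Filter.Tendsto
        (fun n : ℕ =>
          Real.log (∫ ω, Real.exp (t * ∑ j ∈ Finset.Icc 1 n, X (j : ℤ) ω) ∂μ) / n)
        Filter.atTop (nhds c)) := by
  have key : ∀ n m : ℕ,
      ∫ ω, Real.exp (t * ∑ j ∈ Finset.Icc 1 (n + m), X (j : ℤ) ω) ∂μ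
        ≤ Real.exp (4 * t * D)
            * (∫ ω, Real.exp (t * ∑ j ∈ Finset.Icc 1 n, X (j : ℤ) ω) ∂μ)
            * ∫ ω, Real.exp (t * ∑ j ∈ Finset.Icc 1 m, X (j : ℤ) ω) ∂μ :=
    fun n m => aux_key μ ξ hξmeas hindep hident H hH X hX d hd_sum hd D hD t ht n m
  have htD4 : 0 ≤ 4 * t * D := by
    have hDnn : 0 ≤ D := hD ▸ tsum_nonneg (aux_d_nonneg hd)
    positivity
  constructor
  · intro n m _ _; exact key n m
  · intro hint
    set I : ℕ → ℝ := fun k => ∫ ω, Real.exp (t * ∑ j ∈ Finset.Icc 1 k, X (j:ℤ) ω) ∂μ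
      with hIdef
    have hIpos : ∀ k, 0 < I k := by
      intro k
      rw [hIdef]
      refine (integral_pos_iff_support_of_nonneg
        (fun ω => (Real.exp_pos _).le) (hint k)).mpr ?_
      have hsupp : (Function.support fun ω =>
          Real.exp (t * ∑ j ∈ Finset.Icc 1 k, X (j:ℤ) ω)) = Set.univ :=
        Set.eq_univ_iff_forall.mpr fun ω => (Real.exp_pos _).ne'
      rw [hsupp]
      simp
    have hI0 : I 0 = 1 := by
      have he : Finset.Icc 1 0 = (∅ : Finset ℕ) := Finset.Icc_eq_empty (by omega)
      rw [hIdef]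
      simp [he]
    set u : ℕ → ℝ := fun k => Real.log (I k) + 4*t*D with hudef
    have hu0 : u 0 = 4*t*D := by rw [hudef]; simp [hI0]
    have hu_sub : Subadditive u := by
      intro k l
      rcases Nat.eq_zero_or_pos k with hk | hk
      · subst hk
        rw [Nat.zero_add]
        linarith [hu0, htD4]
      rcases Nat.eq_zero_or_pos l with hl | hl
      · subst hl
        rw [Nat.add_zero]
        linarith [hu0, htD4]
      have h := key k l
      have hlog : Real.log (I (k+l)) ≤ Real.log (Real.exp (4*t*D) * I k * I l) :=
        Real.log_le_log (hIpos _) h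
      rw [Real.log_mul (mul_pos (Real.exp_pos _) (hIpos k)).ne' (hIpos l).ne',
        Real.log_mul (Real.exp_ne_zero _) (hIpos k).ne', Real.log_exp] at hlog
      rw [hudef]
      dsimp only
      linarith
    have hXlow : ∀ (z : ℤ) ω, (H (fun _ => 0) - d 0) ≤ X z ω := by
      intro z ω
      rw [hX]
      have h1 := hd 0 (fun j => ξ (z - (j:ℤ)) ω) (fun _ => 0)
        (fun j hj => absurd hj (Nat.not_lt_zero _))
      have h2 := abs_le.mp h1
      linarith [h2.1]
    have hbdd : BddBelow (Set.range fun k : ℕ => u k / k) := by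
      refine ⟨min (t * (H (fun _ => 0) - d 0)) 0, ?_⟩
      rintro x ⟨k, rfl⟩
      dsimp only
      rcases Nat.eq_zero_or_pos k with hk | hk
      · subst hk
        rw [Nat.cast_zero, div_zero]
        exact min_le_right _ _
      have hsumlow : ∀ ω, (k : ℝ) * (H (fun _ => 0) - d 0)
          ≤ ∑ j ∈ Finset.Icc 1 k, X (j:ℤ) ω := by
        intro ω
        have h1 := Finset.card_nsmul_le_sum (Finset.Icc 1 k) (fun j => X (j:ℤ) ω)
          (H (fun _ => 0) - d 0) (fun j _ => hXlow _ ω)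
        rw [Nat.card_Icc, Nat.add_sub_cancel] at h1
        simpa [nsmul_eq_mul] using h1
      have hIlow : Real.exp (t * ((k:ℝ) * (H (fun _ => 0) - d 0))) ≤ I k := by
        rw [hIdef]
        have hconst : Real.exp (t * ((k:ℝ) * (H (fun _ => 0) - d 0)))
            = ∫ _ω, Real.exp (t * ((k:ℝ) * (H (fun _ => 0) - d 0))) ∂μ := by
          rw [integral_const]; simp
        rw [hconst]
        exact integral_mono (integrable_const _) (hint k) fun ω =>
          Real.exp_le_exp.mpr (mul_le_mul_of_nonneg_left (hsumlow ω) ht)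
      have hloglow : t * ((k:ℝ) * (H (fun _ => 0) - d 0)) ≤ Real.log (I k) := by
        have h2 := Real.log_le_log (Real.exp_pos _) hIlow
        rwa [Real.log_exp] at h2
      have hk' : (0:ℝ) < (k:ℝ) := by exact_mod_cast hk
      refine le_trans (min_le_left _ _) ?_
      rw [hudef]
      dsimp only
      rw [le_div_iff₀ hk']
      nlinarith [hloglow, htD4]
    have hlim := hu_sub.tendsto_lim hbdd
    refine ⟨hu_sub.lim, ?_⟩
    have heq : (fun k : ℕ => Real.log (I k) / (k:ℝ))
        = fun k : ℕ => u k / k - (4*t*D)/k := by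
      funext k
      rw [hudef]
      dsimp only
      rw [add_div]
      ring
    show Filter.Tendsto (fun k : ℕ => Real.log (I k) / (k:ℝ)) Filter.atTop (nhds hu_sub.lim)
    rw [heq]
    have h0 : Filter.Tendsto (fun k : ℕ => (4*t*D)/(k:ℝ)) Filter.atTop (nhds 0) :=
      tendsto_const_div_atTop_nhds_zero_nat _
    simpa using hlim.sub h0
end
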